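/- Let β be a mixed base, m ≥ 1, and L ∈ ℕ. Define ℱ_L recursively by ℱ_{-1} = {(0,...,0)} and ℱ_L^{β} = {F ∈ ℕ^m : σ_β(F)_0 = 0 and F̂ + r ∈ ℱ_{L-1}^{β̂} for some r ∈ ρ(F)}. Then every F ∈ ℱ_L^β satisfies: there exists X ∈ ℕ^m with σ_β(X + F) = σ_β(X). -/

import Mathlib

open scoped BigOperators

/-- β̂_L = β_0 ⋯ β_{L-1}, the place value of digit L in mixed base β. -/
def bhat (β : ℕ → ℕ) (L : ℕ) : ℕ := ∏ i ∈ Finset.range L, β i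

/-- The L-th digit of n in the mixed base β. -/
def mdigit (β : ℕ → ℕ) (n L : ℕ) : ℕ := n / bhat β L % β L

/-- Digit-wise addition modulo β_L in mixed base β. -/
def moplus (β : ℕ → ℕ) (n h : ℕ) : ℕ :=
  ∑ L ∈ Finset.range (n + h + 1), ((mdigit β n L + mdigit β h L) % β L) * bhat β L

/-- Digit-wise subtraction modulo β_L in mixed base β. -/
def mominus (β : ℕ → ℕ) (n h : ℕ) : ℕ :=
  ∑ L ∈ Finset.range (n + h + 1), ((β L + mdigit β n L - mdigit β h L) % β L) * bhat β L

/-- σ_β(X) = x^0 ⊕ ⋯ ⊕ x^{m-1}: the digit-wise Nim sum in mixed base β. -/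
def msigma (β : ℕ → ℕ) {m : ℕ} (X : Fin m → ℕ) : ℕ :=
  ∑ L ∈ Finset.range (∑ i, X i + 1), ((∑ i, mdigit β (X i) L) % β L) * bhat β L

/-- Hamming weight: number of nonzero components. -/
def hamwt {m : ℕ} (C : Fin m → ℕ) : ℕ := (Finset.univ.filter (fun i => C i ≠ 0)).card

/-- ord_β(n): the largest L with β̂_L ∣ n (⊤ for n = 0). -/
def mord (β : ℕ → ℕ) (n : ℕ) : ℕ∞ :=
  if n = 0 then ⊤ else (Nat.findGreatest (fun L => bhat β L ∣ n) n : ℕ∞)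

/-- 𝒞 is a Sprague-Grundy system of σ_β: its members are nonzero moves and
σ_β satisfies the mex recursion of the take-away game Γ(ℕ^m, 𝒞), i.e. σ_β is the
Sprague-Grundy function of that game. -/
def IsSGSystem (β : ℕ → ℕ) {m : ℕ} (𝒞 : Set (Fin m → ℕ)) : Prop :=
  (∀ C ∈ 𝒞, C ≠ 0) ∧
  ∀ X : Fin m → ℕ, msigma β X =
    sInf {n : ℕ | ∀ C ∈ 𝒞, (∀ i, C i ≤ X i) → msigma β (fun i => X i - C i) ≠ n}

/-- ρ(F) = {r ∈ {0,1}^m : rⁱ ≤ fⁱ₀}. -/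
def rho (β : ℕ → ℕ) {m : ℕ} (F : Fin m → ℕ) : Set (Fin m → ℕ) :=
  {r | ∀ i, r i ≤ 1 ∧ r i ≤ F i % β 0}

/-- The recursively defined sets ℱ_L^β (with ℱ_{-1} = {0}). -/
def FA (m : ℕ) : ℕ → (ℕ → ℕ) → Set (Fin m → ℕ)
  | 0, β => {F | mdigit β (msigma β F) 0 = 0 ∧
      ∃ r ∈ rho β F, ∀ i, F i / β 0 + r i = 0}
  | (L + 1), β => {F | mdigit β (msigma β F) 0 = 0 ∧
      ∃ r ∈ rho β F, (fun i => F i / β 0 + r i) ∈ FA m L (fun K => β (K + 1))}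

lemma bhat_zero (β : ℕ → ℕ) : bhat β 0 = 1 := by simp [bhat]

lemma bhat_succ (β : ℕ → ℕ) (L : ℕ) : bhat β (L+1) = bhat β L * β L := by
  simp [bhat, Finset.prod_range_succ]

lemma bhat_succ' (β : ℕ → ℕ) (L : ℕ) :
    bhat β (L+1) = β 0 * bhat (fun K => β (K+1)) L := by
  unfold bhat
  rw [Finset.prod_range_succ', mul_comm]

lemma lt_bhat {β : ℕ → ℕ} (hβ : ∀ K, 2 ≤ β K) (L : ℕ) : L < bhat β L := by
  induction L with
  | zero => simp [bhat_zero]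
  | succ L ih =>
    rw [bhat_succ]
    have := hβ L
    nlinarith

lemma mdigit_eq_zero {β : ℕ → ℕ} {n L : ℕ} (h : n < bhat β L) : mdigit β n L = 0 := by
  simp [mdigit, Nat.div_eq_of_lt h]

lemma mdigit_zero' (β : ℕ → ℕ) (n : ℕ) : mdigit β n 0 = n % β 0 := by
  simp [mdigit, bhat_zero]

lemma mdigit_succ (β : ℕ → ℕ) (n L : ℕ) :
    mdigit β n (L+1) = mdigit (fun K => β (K+1)) (n / β 0) L := by
  simp [mdigit, bhat_succ', Nat.div_div_eq_div_mul]

lemma msigma_eq_sum {β : ℕ → ℕ} (hβ : ∀ K, 2 ≤ β K) {m : ℕ} (X : Fin m → ℕ) {N : ℕ}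
    (hN : ∑ i, X i < N) :
    msigma β X = ∑ L ∈ Finset.range N, ((∑ i, mdigit β (X i) L) % β L) * bhat β L := by
  unfold msigma
  apply Finset.sum_subset (Finset.range_subset_range.2 hN)
  intro L hL hL'
  simp only [Finset.mem_range, not_lt] at hL'
  have hX : ∀ i, mdigit β (X i) L = 0 := by
    intro i
    have h1 : X i ≤ ∑ j, X j := Finset.single_le_sum (fun j _ => Nat.zero_le _) (Finset.mem_univ i)
    have h2 : L < bhat β L := lt_bhat hβ L
    exact mdigit_eq_zero (by omega)
  simp [hX]

lemma msigma_zero (β : ℕ → ℕ) {m : ℕ} : msigma β (fun _ : Fin m => 0) = 0 := by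
  simp [msigma, mdigit]

lemma msigma_split {β : ℕ → ℕ} (hβ : ∀ K, 2 ≤ β K) {m : ℕ} (X : Fin m → ℕ) :
    msigma β X = (∑ i, X i % β 0) % β 0
      + β 0 * msigma (fun K => β (K+1)) (fun i => X i / β 0) := by
  by_cases hX : ∀ i, X i = 0
  · have hX' : X = fun _ => 0 := funext hX
    rw [hX']
    simp [msigma_zero, Nat.zero_div]
  · push_neg at hX
    obtain ⟨j, hj⟩ := hX
    have hlt : ∑ i, X i / β 0 < ∑ i, X i :=
      Finset.sum_lt_sum (fun i _ => Nat.div_le_self _ _)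
        ⟨j, Finset.mem_univ j, Nat.div_lt_self (Nat.pos_of_ne_zero hj) (hβ 0)⟩
    have hβ' : ∀ K, 2 ≤ (fun K => β (K+1)) K := fun K => hβ (K+1)
    rw [msigma_eq_sum hβ X (Nat.lt_succ_self _), Finset.sum_range_succ',
      msigma_eq_sum hβ' (fun i => X i / β 0) hlt, Finset.mul_sum]
    rw [add_comm]
    congr 1
    · simp [mdigit_zero', bhat_zero]
    · apply Finset.sum_congr rfl
      intro L _
      simp only [mdigit_succ, bhat_succ']
      ring

lemma msigma_lowdigit {β : ℕ → ℕ} (hβ : ∀ K, 2 ≤ β K) {m : ℕ} (X : Fin m → ℕ) :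
    mdigit β (msigma β X) 0 = (∑ i, X i % β 0) % β 0 := by
  rw [mdigit_zero', msigma_split hβ X, Nat.add_mul_mod_self_left, Nat.mod_mod_of_dvd _ dvd_rfl]

lemma main_lemma (m : ℕ) : ∀ (L : ℕ) (β : ℕ → ℕ), (∀ K, 2 ≤ β K) →
    ∀ F : Fin m → ℕ, F ∈ FA m L β →
    ∃ X : Fin m → ℕ, msigma β (fun i => X i + F i) = msigma β X := by
  intro L
  induction L with
  | zero =>
    intro β hβ F hF
    obtain ⟨hσ, r, hrr, h0⟩ := hF
    have hFlt : ∀ i, F i < β 0 := by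
      intro i
      have h1 := h0 i
      have hd : F i / β 0 = 0 := Nat.eq_zero_of_add_eq_zero_right h1
      have hβ0 : 0 < β 0 := by have := hβ 0; omega
      exact (Nat.div_eq_zero_iff.1 hd).resolve_left (by omega)
    refine ⟨fun _ => 0, ?_⟩
    simp only [zero_add]
    have hlow : (∑ i, F i % β 0) % β 0 = 0 := by
      have h2 := msigma_lowdigit hβ F
      omega
    have h1 : msigma β F = 0 := by
      rw [msigma_split hβ]
      have e : (fun i => F i / β 0) = (fun _ : Fin m => 0) :=
        funext fun i => Nat.div_eq_of_lt (hFlt i)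
      rw [e, msigma_zero]
      simp [hlow]
    show msigma β F = msigma β (fun _ => 0)
    rw [h1, msigma_zero]
  | succ L ih =>
    intro β hβ F hF
    obtain ⟨hσ, r, hrr, hmem⟩ := hF
    have hβ' : ∀ K, 2 ≤ (fun K => β (K+1)) K := fun K => hβ (K+1)
    obtain ⟨Y, hY⟩ := ih (fun K => β (K+1)) hβ' (fun i => F i / β 0 + r i) hmem
    have hβ0 : 0 < β 0 := by have := hβ 0; omega
    set X : Fin m → ℕ := fun i => β 0 * Y i + (β 0 - F i % β 0) * r i with hXdef
    have hf : ∀ i, F i % β 0 < β 0 := fun i => Nat.mod_lt _ hβ0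
    have hcases : ∀ i, r i = 0 ∨ (r i = 1 ∧ 1 ≤ F i % β 0) := by
      intro i
      have := hrr i
      omega
    have hdiv : ∀ i, (X i + F i) / β 0 = Y i + (F i / β 0 + r i) := by
      intro i
      rcases hcases i with h | ⟨h, hge⟩
      · simp only [hXdef, h, mul_zero, add_zero]
        rw [Nat.mul_add_div hβ0]
      · have hsum : X i + F i = β 0 * (Y i + (F i / β 0 + 1)) := by
          have h3 := Nat.div_add_mod (F i) (β 0)
          simp only [hXdef, h, mul_one]
          rw [mul_add, mul_add, mul_one]
          have h4 := hf i
          omega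
        rw [hsum, h, Nat.mul_div_cancel_left _ hβ0]
    have hmod : ∀ i, (X i + F i) % β 0 + β 0 * r i = F i % β 0 + X i % β 0 := by
      intro i
      rcases hcases i with h | ⟨h, hge⟩
      · simp only [hXdef, h, mul_zero, add_zero]
        rw [Nat.mul_add_mod, Nat.mul_mod_right]
        omega
      · have hsum : X i + F i = β 0 * (Y i + (F i / β 0 + 1)) := by
          have h3 := Nat.div_add_mod (F i) (β 0)
          simp only [hXdef, h, mul_one]
          rw [mul_add, mul_add, mul_one]
          have h4 := hf i
          omega
        have hXm : X i % β 0 = β 0 - F i % β 0 := by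
          simp only [hXdef, h, mul_one]
          rw [Nat.mul_add_mod]
          exact Nat.mod_eq_of_lt (by have := hf i; omega)
        rw [hsum, h, Nat.mul_mod_right, hXm]
        have := hf i
        omega
    have hXdiv : ∀ i, X i / β 0 = Y i := by
      intro i
      simp only [hXdef]
      rw [Nat.mul_add_div hβ0]
      rcases hcases i with h | ⟨h, hge⟩
      · simp [h]
      · rw [h, mul_one, Nat.div_eq_of_lt (by have := hf i; omega), add_zero]
    refine ⟨X, ?_⟩
    rw [msigma_split hβ (fun i => X i + F i), msigma_split hβ X]
    have e1 : (fun i => (X i + F i) / β 0) = (fun i => Y i + (F i / β 0 + r i)) :=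
      funext hdiv
    have e2 : (fun i => X i / β 0) = Y := funext hXdiv
    rw [e1, e2, hY]
    congr 1
    -- low digits
    have hlowsum : (∑ i, (X i + F i) % β 0) + β 0 * (∑ i, r i)
        = (∑ i, F i % β 0) + ∑ i, X i % β 0 := by
      rw [Finset.mul_sum, ← Finset.sum_add_distrib, ← Finset.sum_add_distrib]
      exact Finset.sum_congr rfl (fun i _ => hmod i)
    have hF0 : (∑ i, F i % β 0) % β 0 = 0 := by
      have h2 := msigma_lowdigit hβ F
      omega
    obtain ⟨t, ht⟩ := Nat.dvd_of_mod_eq_zero hF0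
    have : (∑ i, (X i + F i) % β 0) % β 0
        = ((∑ i, (X i + F i) % β 0) + β 0 * (∑ i, r i)) % β 0 := by
      rw [Nat.add_mul_mod_self_left]
    rw [this, hlowsum, ht, add_comm, Nat.add_mul_mod_self_left]

/-- Every member of ℱ_L^β lies in ℱ^β: it fails to change σ_β at some X. -/
theorem stmt19 (β : ℕ → ℕ) (hβ : ∀ L, 2 ≤ β L) {m : ℕ} (hm : 1 ≤ m)
    (L : ℕ) (F : Fin m → ℕ) (hF : F ∈ FA m L β) :
    ∃ X : Fin m → ℕ, msigma β (fun i => X i + F i) = msigma β X :=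
  main_lemma m L β hβ F hF
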